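/- Fix t and a probability space carrying random variables (S_t, A_t, Γ_t) with E[Γ_t²] < ∞. Let q* (s,a) := E[Γ_t | S_t = s, A_t = a] and let H* be a σ(S_t,A_t)-measurable square-integrable function such that G(q) := γ^{t−1} E[H*(S_t,A_t) q(S_t,A_t)] for every square-integrable q (i.e., H* represents the functional G). Define the augmented functional G̃(q, H) := G(q) + γ^{t−1} E[H(S_t,A_t)(Γ_t − q(S_t,A_t))]. Then for any square-integrable q and any square-integrable σ(S_t,A_t)-measurable H, one has G̃(q, H) − G(q*) = γ^{t−1} E[(H*(S_t,A_t) − H(S_t,A_t))(q(S_t,A_t) − q*(S_t,A_t))]. -/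

import Mathlib

open MeasureTheory ProbabilityTheory

private lemma memL2_mul_integrable {Ω : Type*} [MeasurableSpace Ω] {P : Measure Ω}
    {f g : Ω → ℝ} (hf : MemLp f 2 P) (hg : MemLp g 2 P) :
    Integrable (fun ω => f ω * g ω) P := by
  have h12 : (1 : ENNReal) / 1 = 1 / 2 + 1 / 2 := by
    rw [ENNReal.div_add_div_same]; norm_num; exact (ENNReal.div_self two_ne_zero ENNReal.ofNat_ne_top).symm
  have : MemLp (f • g) 1 P := hg.smul hf
  rw [memLp_one_iff_integrable] at this
  exact this

/-- Mixed-bias identity (Lemma 3.1): for the augmented stagewise functional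
`G̃(q,H) = G(q) + γ^{t−1} E[H(S,A)(Γ − q(S,A))]` with `G(q) = γ^{t−1} E[H*(S,A) q(S,A)]`
and `q*(s,a) = E[Γ|S=s,A=a]`, one has
`G̃(q,H) − G(q*) = γ^{t−1} E[(H* − H)(q − q*)]`. -/
theorem mixed_bias_identity
    {Ω 𝓢 𝓐 : Type*} [MeasurableSpace Ω] [MeasurableSpace 𝓢] [MeasurableSpace 𝓐]
    (P : Measure Ω) [IsProbabilityMeasure P]
    (t : ℕ) (γ : ℝ) (hγ : γ ∈ Set.Ioc (0 : ℝ) 1)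
    (S : Ω → 𝓢) (A : Ω → 𝓐) (hS : Measurable S) (hA : Measurable A)
    (Γ : Ω → ℝ) (hΓ : MemLp Γ 2 P)
    (qstar : 𝓢 → 𝓐 → ℝ) (hqstarMeas : Measurable (Function.uncurry qstar))
    -- q* is the conditional expectation of Γ given (S,A):
    (hqstar : (fun ω => qstar (S ω) (A ω))
      =ᵐ[P] P[Γ|MeasurableSpace.comap (fun ω => (S ω, A ω)) inferInstance])
    (hqstarL2 : MemLp (fun ω => qstar (S ω) (A ω)) 2 P)
    (Hstar : 𝓢 → 𝓐 → ℝ) (hHstarMeas : Measurable (Function.uncurry Hstar))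
    (hHstarL2 : MemLp (fun ω => Hstar (S ω) (A ω)) 2 P)
    (q : 𝓢 → 𝓐 → ℝ) (hqMeas : Measurable (Function.uncurry q))
    (hqL2 : MemLp (fun ω => q (S ω) (A ω)) 2 P)
    (H : 𝓢 → 𝓐 → ℝ) (hHMeas : Measurable (Function.uncurry H))
    (hHL2 : MemLp (fun ω => H (S ω) (A ω)) 2 P) :
    (γ ^ (t - 1) * ∫ ω, Hstar (S ω) (A ω) * q (S ω) (A ω) ∂P
        + γ ^ (t - 1) * ∫ ω, H (S ω) (A ω) * (Γ ω - q (S ω) (A ω)) ∂P)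
      - γ ^ (t - 1) * ∫ ω, Hstar (S ω) (A ω) * qstar (S ω) (A ω) ∂P
    = γ ^ (t - 1) * ∫ ω, (Hstar (S ω) (A ω) - H (S ω) (A ω))
        * (q (S ω) (A ω) - qstar (S ω) (A ω)) ∂P := by
  have hm : MeasurableSpace.comap (fun ω => (S ω, A ω)) inferInstance
      ≤ ‹MeasurableSpace Ω› := (hS.prodMk hA).comap_le
  have hSAm : Measurable[MeasurableSpace.comap (fun ω => (S ω, A ω)) inferInstance]
      (fun ω => (S ω, A ω)) := Measurable.of_comap_le le_rfl
  have hHm : StronglyMeasurable[MeasurableSpace.comap (fun ω => (S ω, A ω)) inferInstance]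
      (fun ω => H (S ω) (A ω)) := (hHMeas.comp hSAm).stronglyMeasurable
  have hHΓ : Integrable (fun ω => H (S ω) (A ω) * Γ ω) P := memL2_mul_integrable hHL2 hΓ
  have hHΓ' : Integrable ((fun ω => H (S ω) (A ω)) * Γ) P := hHΓ
  have hkey : ∫ ω, H (S ω) (A ω) * Γ ω ∂P = ∫ ω, H (S ω) (A ω) * qstar (S ω) (A ω) ∂P := by
    have hΓ1 : Integrable Γ P :=
      memLp_one_iff_integrable.mp (hΓ.mono_exponent (by norm_num))
    have h1 : P[(fun ω => H (S ω) (A ω)) * Γ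
          | MeasurableSpace.comap (fun ω => (S ω, A ω)) inferInstance]
        =ᵐ[P] (fun ω => H (S ω) (A ω))
          * P[Γ | MeasurableSpace.comap (fun ω => (S ω, A ω)) inferInstance] :=
      condExp_mul_of_stronglyMeasurable_left hHm hHΓ' hΓ1
    calc ∫ ω, H (S ω) (A ω) * Γ ω ∂P
        = ∫ ω, (P[(fun ω => H (S ω) (A ω)) * Γ
            | MeasurableSpace.comap (fun ω => (S ω, A ω)) inferInstance]) ω ∂P :=
          (integral_condExp (μ := P) (f := (fun ω => H (S ω) (A ω)) * Γ) hm).symm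
      _ = ∫ ω, H (S ω) (A ω) * qstar (S ω) (A ω) ∂P := by
          refine integral_congr_ae ?_
          filter_upwards [h1, hqstar] with ω h1ω hω
          simp only [h1ω, Pi.mul_apply, ← hω]
  have h1 := memL2_mul_integrable hHstarL2 hqL2
  have h2 := memL2_mul_integrable hHstarL2 hqstarL2
  have h3 := memL2_mul_integrable hHL2 hqL2
  have h4 := memL2_mul_integrable hHL2 hqstarL2
  have hHΓq : ∫ ω, H (S ω) (A ω) * (Γ ω - q (S ω) (A ω)) ∂P
      = ∫ ω, H (S ω) (A ω) * qstar (S ω) (A ω) ∂P - ∫ ω, H (S ω) (A ω) * q (S ω) (A ω) ∂P := by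
    have heq : (fun ω => H (S ω) (A ω) * (Γ ω - q (S ω) (A ω)))
        = fun ω => H (S ω) (A ω) * Γ ω - H (S ω) (A ω) * q (S ω) (A ω) := by
      funext ω; ring
    rw [heq, integral_sub hHΓ h3, hkey]
  have h12 : Integrable (fun ω => Hstar (S ω) (A ω) * q (S ω) (A ω)
      - Hstar (S ω) (A ω) * qstar (S ω) (A ω)) P := h1.sub h2
  have h123 : Integrable (fun ω => Hstar (S ω) (A ω) * q (S ω) (A ω)
      - Hstar (S ω) (A ω) * qstar (S ω) (A ω) - H (S ω) (A ω) * q (S ω) (A ω)) P := h12.sub h3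
  have hRHS : ∫ ω, (Hstar (S ω) (A ω) - H (S ω) (A ω)) * (q (S ω) (A ω) - qstar (S ω) (A ω)) ∂P
      = ∫ ω, Hstar (S ω) (A ω) * q (S ω) (A ω) ∂P
        - ∫ ω, Hstar (S ω) (A ω) * qstar (S ω) (A ω) ∂P
        - ∫ ω, H (S ω) (A ω) * q (S ω) (A ω) ∂P
        + ∫ ω, H (S ω) (A ω) * qstar (S ω) (A ω) ∂P := by
    have heq : (fun ω => (Hstar (S ω) (A ω) - H (S ω) (A ω)) * (q (S ω) (A ω) - qstar (S ω) (A ω)))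
        = fun ω => Hstar (S ω) (A ω) * q (S ω) (A ω) - Hstar (S ω) (A ω) * qstar (S ω) (A ω)
          - H (S ω) (A ω) * q (S ω) (A ω) + H (S ω) (A ω) * qstar (S ω) (A ω) := by
      funext ω; ring
    rw [heq, integral_add h123 h4, integral_sub h12 h3, integral_sub h1 h2]
  rw [hHΓq, hRHS]; ring
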